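/- Let F be a field, R the ring of ternions over F, and n ≥ 1. The group GL_{n+1}(R) acts transitively on the set of non-unimodular free cyclic submodules of R^{n+1}: for any two non-unimodular free cyclic submodules M and M′ there exists A ∈ GL_{n+1}(R) with M·A = M′. -/

import Mathlib

set_option synthInstance.maxHeartbeats 1000000
set_option maxHeartbeats 1000000

/-- The ring of ternions over a field `F`: the subring of `2×2` matrices over `F`
consisting of all upper triangular matrices. -/
def ternions (F : Type) [Field F] : Subring (Matrix (Fin 2) (Fin 2) F) where
  carrier := {A | A 1 0 = 0}
  zero_mem' := by simp
  one_mem' := by simp [Matrix.one_apply]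
  add_mem' := by
    intro a b ha hb
    simp only [Set.mem_setOf_eq, Matrix.add_apply] at *
    simp [ha, hb]
  neg_mem' := by
    intro a ha
    simp only [Set.mem_setOf_eq, Matrix.neg_apply] at *
    simp [ha]
  mul_mem' := by
    intro a b ha hb
    simp only [Set.mem_setOf_eq, Matrix.mul_apply, Fin.sum_univ_two] at *
    simp [ha, hb]


variable {F : Type} [Field F]

def tern (a b c : F) : ternions F :=
  ⟨!![a, b; 0, c], by change !![a, b; 0, c] 1 0 = 0; simp⟩

lemma tern_eta (x : ternions F) :
    x = tern ((x : Matrix (Fin 2) (Fin 2) F) 0 0) ((x : Matrix (Fin 2) (Fin 2) F) 0 1)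
      ((x : Matrix (Fin 2) (Fin 2) F) 1 1) := by
  apply Subtype.ext
  ext i j
  fin_cases i <;> fin_cases j <;>
    simp [tern, show (x : Matrix (Fin 2) (Fin 2) F) 1 0 = 0 from x.2]

lemma tern_mul (a b c a' b' c' : F) :
    tern a b c * tern a' b' c' = tern (a * a') (a * b' + b * c') (c * c') := by
  apply Subtype.ext
  show (_ * _ : Matrix (Fin 2) (Fin 2) F) = _
  ext i j
  fin_cases i <;> fin_cases j <;>
    simp [tern, Matrix.mul_apply, Fin.sum_univ_two]

lemma tern_add (a b c a' b' c' : F) :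
    tern a b c + tern a' b' c' = tern (a + a') (b + b') (c + c') := by
  apply Subtype.ext
  show (_ + _ : Matrix (Fin 2) (Fin 2) F) = _
  ext i j
  fin_cases i <;> fin_cases j <;> simp [tern]

lemma tern_entries {a b c a' b' c' : F} (h : tern a b c = tern (F := F) a' b' c') :
    a = a' ∧ b = b' ∧ c = c' := by
  have h' := congrArg (fun x : ternions F => (x : Matrix (Fin 2) (Fin 2) F)) h
  refine ⟨?_, ?_, ?_⟩
  · have := congrFun (congrFun h' 0) 0; simpa [tern] using this
  · have := congrFun (congrFun h' 0) 1; simpa [tern] using this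
  · have := congrFun (congrFun h' 1) 1; simpa [tern] using this

lemma tern_zero : tern (F := F) 0 0 0 = 0 := by
  apply Subtype.ext
  show _ = (0 : Matrix (Fin 2) (Fin 2) F)
  ext i j
  fin_cases i <;> fin_cases j <;> simp [tern]

lemma tern_one : tern (F := F) 1 0 1 = 1 := by
  apply Subtype.ext
  show _ = (1 : Matrix (Fin 2) (Fin 2) F)
  ext i j
  fin_cases i <;> fin_cases j <;> simp [tern, Matrix.one_apply]

lemma extract {n : ℕ} (Z : Fin (n + 1) → ternions F)
    (hZ : Function.Injective (fun r : ternions F => r • Z))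
    (hZnu : ¬ ∃ φ : (Fin (n + 1) → ternions F) →ₗ[ternions F] ternions F, φ Z = 1) :
    ∃ b c : Fin (n + 1) → F,
      LinearIndependent F ![b, c] ∧ ∀ i, Z i = tern 0 (b i) (c i) := by
  set a : Fin (n + 1) → F := fun i => (Z i : Matrix (Fin 2) (Fin 2) F) 0 0 with ha
  set b : Fin (n + 1) → F := fun i => (Z i : Matrix (Fin 2) (Fin 2) F) 0 1 with hb
  set c : Fin (n + 1) → F := fun i => (Z i : Matrix (Fin 2) (Fin 2) F) 1 1 with hc
  have heta : ∀ i, Z i = tern (a i) (b i) (c i) := fun i => tern_eta (Z i)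
  -- freeness reformulated
  have step0 : ∀ r : ternions F, (∀ i, r * Z i = 0) → r = 0 := by
    intro r h
    have : (fun r : ternions F => r • Z) r = (fun r : ternions F => r • Z) 0 := by
      funext i
      show r • Z i = (0 : ternions F) • Z i
      rw [smul_eq_mul, smul_eq_mul, h i, zero_mul]
    exact hZ this
  -- some c is nonzero
  have step1 : ∃ m, c m ≠ 0 := by
    by_contra hcon
    push_neg at hcon
    have h0 : ∀ i, tern (F := F) 0 1 0 * Z i = 0 := by
      intro i
      rw [heta i, tern_mul, hcon i]
      simpa using tern_zero
    have := step0 _ h0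
    rw [← tern_zero] at this
    exact one_ne_zero (tern_entries this).2.1
  -- all a are zero
  have step2 : ∀ k, a k = 0 := by
    intro k
    by_contra hak
    obtain ⟨m, hcm⟩ := step1
    apply hZnu
    set p : ternions F := tern (a k)⁻¹ (-((a k)⁻¹ * (b m * (c m)⁻¹))) 0 with hp
    set q : ternions F := tern 0 0 (c m)⁻¹ with hq
    set s : Fin (n + 1) → ternions F :=
      fun i => (if i = k then p else 0) + (if i = m then q else 0) with hs
    refine ⟨⟨⟨fun v => ∑ i, v i * s i, ?_⟩, ?_⟩, ?_⟩
    · intro v w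
      simp [add_mul, Finset.sum_add_distrib]
    · intro r v
      simp only [RingHom.id_apply, Pi.smul_apply, smul_eq_mul]
      rw [Finset.mul_sum]
      simp [mul_assoc]
    · show ∑ i, Z i * s i = 1
      have : ∀ i, Z i * s i =
          (if i = k then Z k * p else 0) + (if i = m then Z m * q else 0) := by
        intro i
        by_cases h1 : i = k <;> by_cases h2 : i = m <;>
          simp [hs, h1, h2, mul_add] <;> split <;> subst_vars <;> rfl
      rw [Finset.sum_congr rfl (fun i _ => this i)]
      rw [Finset.sum_add_distrib, Finset.sum_ite_eq' Finset.univ k, Finset.sum_ite_eq' Finset.univ m]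
      simp only [Finset.mem_univ, if_true]
      rw [heta k, heta m, hp, hq, tern_mul, tern_mul]
      rw [← tern_one]
      rw [tern_add]
      congr 1 <;> field_simp <;> ring
  -- linear independence
  have step3 : LinearIndependent F ![b, c] := by
    rw [LinearIndependent.pair_iff]
    intro α β hst
    have h0 : ∀ i, tern (F := F) α β 0 * Z i = 0 := by
      intro i
      rw [heta i, tern_mul, step2 i]
      have : α * b i + β * c i = 0 := by
        have := congrFun hst i
        simpa [smul_eq_mul] using this
      rw [this]
      simpa using tern_zero
    have := step0 _ h0
    rw [← tern_zero] at this
    exact ⟨(tern_entries this).1, (tern_entries this).2.1⟩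
  exact ⟨b, c, step3, fun i => by rw [heta i, step2 i]⟩

lemma pair_ne {V : Type} [AddCommGroup V] [Module F V] {b c : V}
    (h : LinearIndependent F ![b, c]) : b ≠ c := by
  intro hbc
  obtain ⟨h1, -⟩ := LinearIndependent.pair_iff.mp h 1 (-1) (by rw [hbc]; simp)
  exact one_ne_zero h1

lemma exists_equiv_pair {V : Type} [AddCommGroup V] [Module F V] [FiniteDimensional F V]
    {b c b' c' : V} (h : LinearIndependent F ![b, c]) (h' : LinearIndependent F ![b', c']) :
    ∃ γ : V ≃ₗ[F] V, γ b = b' ∧ γ c = c' := by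
  classical
  have hr := (linearIndepOn_id_range_iff h.injective).mpr h
  have hr' := (linearIndepOn_id_range_iff h'.injective).mpr h'
  let B := Module.Basis.extend hr
  let B' := Module.Basis.extend hr'
  haveI : Fintype (hr.extend (Set.subset_univ _)) := FiniteDimensional.fintypeBasisIndex B
  haveI : Fintype (hr'.extend (Set.subset_univ _)) := FiniteDimensional.fintypeBasisIndex B'
  have hbmem : b ∈ hr.extend (Set.subset_univ _) :=
    hr.subset_extend _ ⟨0, by simp⟩
  have hcmem : c ∈ hr.extend (Set.subset_univ _) :=
    hr.subset_extend _ ⟨1, by simp⟩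
  have hbmem' : b' ∈ hr'.extend (Set.subset_univ _) :=
    hr'.subset_extend _ ⟨0, by simp⟩
  have hcmem' : c' ∈ hr'.extend (Set.subset_univ _) :=
    hr'.subset_extend _ ⟨1, by simp⟩
  set bi : hr.extend (Set.subset_univ _) := ⟨b, hbmem⟩
  set ci : hr.extend (Set.subset_univ _) := ⟨c, hcmem⟩
  set bi' : hr'.extend (Set.subset_univ _) := ⟨b', hbmem'⟩
  set ci' : hr'.extend (Set.subset_univ _) := ⟨c', hcmem'⟩
  have hne : bi ≠ ci := fun hh => pair_ne h (congrArg Subtype.val hh)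
  have hne' : bi' ≠ ci' := fun hh => pair_ne h' (congrArg Subtype.val hh)
  have hcard : Fintype.card (hr.extend (Set.subset_univ _)) =
      Fintype.card (hr'.extend (Set.subset_univ _)) := by
    rw [← Module.finrank_eq_card_basis B, ← Module.finrank_eq_card_basis B']
  let e0 := Fintype.equivOfCardEq hcard
  let e1 := e0.trans (Equiv.swap (e0 bi) bi')
  have he1b : e1 bi = bi' := by simp [e1]
  let e2 := e1.trans (Equiv.swap (e1 ci) ci')
  have he2c : e2 ci = ci' := by simp [e2]
  have he2b : e2 bi = bi' := by
    show Equiv.swap (e1 ci) ci' (e1 bi) = bi'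
    rw [he1b]
    refine Equiv.swap_apply_of_ne_of_ne ?_ hne'
    rw [← he1b]
    exact fun hh => hne (e1.injective hh.symm).symm
  refine ⟨B.equiv B' e2, ?_, ?_⟩
  · have := B.equiv_apply (b' := B') bi e2
    rwa [Module.Basis.extend_apply_self, he2b, Module.Basis.extend_apply_self] at this
  · have := B.equiv_apply (b' := B') ci e2
    rwa [Module.Basis.extend_apply_self, he2c, Module.Basis.extend_apply_self] at this

noncomputable def ternD : F →+* ternions F where
  toFun x := tern x 0 x
  map_one' := tern_one
  map_mul' x y := by rw [tern_mul, mul_zero, zero_mul, add_zero]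
  map_zero' := tern_zero
  map_add' x y := by simp only [tern_add, add_zero]

lemma tern_sum {n : ℕ} (u w : Fin (n + 1) → F) :
    ∑ i, tern 0 (u i) (w i) = tern (F := F) 0 (∑ i, u i) (∑ i, w i) := by
  apply Subtype.ext
  rw [AddSubmonoidClass.coe_finset_sum]
  show _ = (tern (F := F) 0 (∑ i, u i) (∑ i, w i) : Matrix (Fin 2) (Fin 2) F)
  ext i j
  rw [Matrix.sum_apply]
  fin_cases i <;> fin_cases j <;> simp [tern]

/-- `GL_{n+1}(R)` acts transitively on the non-unimodular free cyclic submodules of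
`R^{n+1}`: for any two such submodules `R·X` and `R·Y` there is an invertible matrix `A`
over `R` mapping the first onto the second (element-wise right multiplication). -/
theorem ternion_transitive_on_nonUnimodular_free (F : Type) [Field F] (n : ℕ)
    (hn : 1 ≤ n) (X Y : Fin (n + 1) → ternions F)
    (hX : Function.Injective (fun r : ternions F => r • X))
    (hXnu : ¬ ∃ φ : (Fin (n + 1) → ternions F) →ₗ[ternions F] ternions F, φ X = 1)
    (hY : Function.Injective (fun r : ternions F => r • Y))
    (hYnu : ¬ ∃ φ : (Fin (n + 1) → ternions F) →ₗ[ternions F] ternions F, φ Y = 1) :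
    ∃ A : (Matrix (Fin (n + 1)) (Fin (n + 1)) (ternions F))ˣ,
      (fun v => Matrix.vecMul v A.val) ''
          (Submodule.span (ternions F) {X} : Set (Fin (n + 1) → ternions F)) =
        (Submodule.span (ternions F) {Y} : Set (Fin (n + 1) → ternions F)) := by
  classical
  obtain ⟨b, c, hbc, hXe⟩ := extract X hX hXnu
  obtain ⟨b', c', hbc', hYe⟩ := extract Y hY hYnu
  obtain ⟨γ, hγb, hγc⟩ := exists_equiv_pair hbc hbc'
  set G : Matrix (Fin (n + 1)) (Fin (n + 1)) F :=
    (LinearMap.toMatrix' (γ.toLinearMap)).transpose with hG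
  set Gi : Matrix (Fin (n + 1)) (Fin (n + 1)) F :=
    (LinearMap.toMatrix' (γ.symm.toLinearMap)).transpose with hGi
  have hid1 : γ.symm.toLinearMap ∘ₗ γ.toLinearMap = LinearMap.id := by
    ext v : 1; simp
  have hid2 : γ.toLinearMap ∘ₗ γ.symm.toLinearMap = LinearMap.id := by
    ext v : 1; simp
  have hGGi : G * Gi = 1 := by
    rw [hG, hGi, ← Matrix.transpose_mul, ← LinearMap.toMatrix'_comp, hid1,
      LinearMap.toMatrix'_id, Matrix.transpose_one]
  have hGiG : Gi * G = 1 := by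
    rw [hG, hGi, ← Matrix.transpose_mul, ← LinearMap.toMatrix'_comp, hid2,
      LinearMap.toMatrix'_id, Matrix.transpose_one]
  have hvec : ∀ v : Fin (n + 1) → F, Matrix.vecMul v G = γ v := by
    intro v
    rw [hG, Matrix.vecMul_transpose, ← Matrix.toLin'_apply, Matrix.toLin'_toMatrix']
    rfl
  set d : F →+* ternions F := ternD with hd
  set A : Matrix (Fin (n + 1)) (Fin (n + 1)) (ternions F) := d.mapMatrix G with hA
  set Ai : Matrix (Fin (n + 1)) (Fin (n + 1)) (ternions F) := d.mapMatrix Gi with hAi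
  have hU1 : A * Ai = 1 := by rw [hA, hAi, ← map_mul, hGGi, map_one]
  have hU2 : Ai * A = 1 := by rw [hA, hAi, ← map_mul, hGiG, map_one]
  refine ⟨⟨A, Ai, hU1, hU2⟩, ?_⟩
  -- the key computation
  have key : Matrix.vecMul X A = Y := by
    funext j
    have h1 : Matrix.vecMul X A j = ∑ i, X i * A i j := by
      simp [Matrix.vecMul, dotProduct]
    have h2 : ∀ i, X i * A i j = tern 0 (b i * G i j) (c i * G i j) := by
      intro i
      rw [hXe i, hA]
      show tern 0 (b i) (c i) * d (G i j) = _
      rw [hd]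
      show tern 0 (b i) (c i) * tern (G i j) 0 (G i j) = _
      rw [tern_mul, zero_mul, zero_mul, zero_add]
    rw [h1, Finset.sum_congr rfl fun i _ => h2 i, tern_sum]
    have hb' : ∑ i, b i * G i j = b' j := by
      have := congrFun (hvec b) j
      rw [hγb] at this
      rw [← this]
      simp [Matrix.vecMul, dotProduct]
    have hc' : ∑ i, c i * G i j = c' j := by
      have := congrFun (hvec c) j
      rw [hγc] at this
      rw [← this]
      simp [Matrix.vecMul, dotProduct]
    rw [hb', hc', ← hYe j]
  -- linear map given by right multiplication by A
  set L : (Fin (n + 1) → ternions F) →ₗ[ternions F] (Fin (n + 1) → ternions F) :=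
    { toFun := fun v => Matrix.vecMul v A
      map_add' := fun v w => by
        funext j
        simp [Matrix.vecMul, dotProduct, add_mul, Finset.sum_add_distrib]
      map_smul' := fun r v => by
        funext j
        simp only [RingHom.id_apply, Pi.smul_apply, smul_eq_mul, Matrix.vecMul,
          dotProduct]
        rw [Finset.mul_sum]
        exact Finset.sum_congr rfl fun i _ => by rw [mul_assoc] } with hL
  show (fun v => Matrix.vecMul v A) '' _ = _
  have himg : (fun v => Matrix.vecMul v A) = ⇑L := rfl
  rw [himg, ← Submodule.map_coe, Submodule.map_span, Set.image_singleton]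
  have hLX : L X = Y := key
  rw [hLX]
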